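/- Let E ⊆ ℝ² be a solid ellipse centered at the origin with semi-axes a ≤ b, and let x be a boundary point of E. Then E contains a closed Euclidean disc D of radius a²/b with x ∈ ∂D (the disc centered at x + (a²/b)·n where n is the inward unit normal to ∂E at x). -/

import Mathlib

open scoped RealInnerProductSpace

lemma keyineq (al be x1 x2 d1 d2 N r : ℝ) (hbe : 0 < be) (hba : be ≤ al)
    (hx : al * x1 ^ 2 + be * x2 ^ 2 = 1)
    (hN : N ^ 2 = al ^ 2 * x1 ^ 2 + be ^ 2 * x2 ^ 2) (hNpos : 0 < N)
    (hr : al ^ 2 * r ^ 2 = be) (hrpos : 0 < r) (hd : d1 ^ 2 + d2 ^ 2 ≤ r ^ 2) :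
    al * (x1 - (r / N) * (al * x1) + d1) ^ 2
      + be * (x2 - (r / N) * (be * x2) + d2) ^ 2 ≤ 1 := by
  have hal : 0 < al := lt_of_lt_of_le hbe hba
  have hNsq : be ≤ N ^ 2 := by nlinarith [mul_nonneg (mul_nonneg hal.le (sq_nonneg x1)) (sub_nonneg.2 hba)]
  have hNra : r * al ≤ N := by nlinarith
  have hNrb : r * be ≤ N := by nlinarith
  have key : r * (N ^ 2 - (al * (N * x1 - r * al * x1 + N * d1) ^ 2
        + be * (N * x2 - r * be * x2 + N * d2) ^ 2))
      = N ^ 3 * (r ^ 2 - d1 ^ 2 - d2 ^ 2)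
        + (N - r * al) * (N * d1 - r * al * x1) ^ 2
        + (N - r * be) * (N * d2 - r * be * x2) ^ 2 := by
    linear_combination (-(N ^ 2 * r)) * hx + (-(N * r ^ 2)) * hN
  have hrhs : 0 ≤ N ^ 3 * (r ^ 2 - d1 ^ 2 - d2 ^ 2)
        + (N - r * al) * (N * d1 - r * al * x1) ^ 2
        + (N - r * be) * (N * d2 - r * be * x2) ^ 2 := by
    have h1 : 0 ≤ N ^ 3 := by positivity
    have := sq_nonneg (N * d1 - r * al * x1)
    have := sq_nonneg (N * d2 - r * be * x2)
    nlinarith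
  have hstuff : al * (N * x1 - r * al * x1 + N * d1) ^ 2
      + be * (N * x2 - r * be * x2 + N * d2) ^ 2 ≤ N ^ 2 := by nlinarith
  have hN0 : N ≠ 0 := ne_of_gt hNpos
  have e1 : x1 - (r / N) * (al * x1) + d1 = (N * x1 - r * al * x1 + N * d1) / N := by
    field_simp
  have e2 : x2 - (r / N) * (be * x2) + d2 = (N * x2 - r * be * x2 + N * d2) / N := by
    field_simp
  rw [e1, e2]
  have hN2 : (0:ℝ) < N ^ 2 := by positivity
  rw [div_pow, div_pow, ← mul_div_assoc, ← mul_div_assoc, ← add_div, div_le_one hN2]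
  exact hstuff

theorem stmt11 (B : LinearMap.BilinForm ℝ (EuclideanSpace ℝ (Fin 2)))
    (hsymm : ∀ z w, B z w = B w z)
    (a b : ℝ) (ha : 0 < a) (hab : a ≤ b)
    (u w : EuclideanSpace ℝ (Fin 2))
    (huu : ⟪u, u⟫ = 1) (hww : ⟪w, w⟫ = 1) (huw : ⟪u, w⟫ = 0)
    (hBu : B u u = (a ^ 2)⁻¹) (hBw : B w w = (b ^ 2)⁻¹) (hBuw : B u w = 0)
    (x : EuclideanSpace ℝ (Fin 2)) (hx : B x x = 1)
    (g : EuclideanSpace ℝ (Fin 2)) (hg : ∀ z, ⟪g, z⟫ = B x z) :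
    x ∈ Metric.sphere (x - ((a ^ 2 / b) * ‖g‖⁻¹) • g) (a ^ 2 / b) ∧
    Metric.closedBall (x - ((a ^ 2 / b) * ‖g‖⁻¹) • g) (a ^ 2 / b) ⊆
      {v : EuclideanSpace ℝ (Fin 2) | B v v ≤ 1} := by
  have hb : 0 < b := lt_of_lt_of_le ha hab
  -- the span of u, w is everything
  have hON : Orthonormal ℝ ![u, w] := by
    rw [orthonormal_iff_ite]
    intro i j
    fin_cases i <;> fin_cases j <;>
      simp_all [real_inner_comm u w,
        (by rw [← real_inner_self_eq_norm_sq]; exact huu : ‖u‖ ^ 2 = 1)]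
  have hspan : Submodule.span ℝ (Set.range ![u, w]) = ⊤ :=
    hON.linearIndependent.span_eq_top_of_card_eq_finrank (by simp)
  have hrange : Set.range ![u, w] = {u, w} := by
    ext z; simp [Matrix.range_cons, Matrix.range_empty]; tauto
  have hrep : ∀ z : EuclideanSpace ℝ (Fin 2), z = ⟪u, z⟫ • u + ⟪w, z⟫ • w := by
    intro z
    have hz : z ∈ Submodule.span ℝ ({u, w} : Set (EuclideanSpace ℝ (Fin 2))) := by
      rw [← hrange, hspan]; trivial
    obtain ⟨p, q, hpq⟩ := Submodule.mem_span_pair.mp hz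
    have hp : ⟪u, z⟫ = p := by
      rw [← hpq]; simp [inner_add_right, inner_smul_right, huu, huw,
        (by rw [← real_inner_self_eq_norm_sq]; exact huu : ‖u‖ ^ 2 = 1)]
    have hq : ⟪w, z⟫ = q := by
      rw [← hpq]
      simp [inner_add_right, inner_smul_right, hww, real_inner_comm u w, huw,
        (by rw [← real_inner_self_eq_norm_sq]; exact hww : ‖w‖ ^ 2 = 1)]
    rw [hp, hq, hpq]
  set al := (a ^ 2)⁻¹ with hal_def
  set be := (b ^ 2)⁻¹ with hbe_def
  have hbe : 0 < be := by positivity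
  have hba : be ≤ al := by
    rw [hal_def, hbe_def]
    apply inv_anti₀ (by positivity)
    exact pow_le_pow_left₀ ha.le hab 2
  have hBwu : B w u = 0 := by rw [hsymm]; exact hBuw
  have hBzz : ∀ p q p' q' : ℝ, B (p • u + q • w) (p' • u + q' • w)
      = al * (p * p') + be * (q * q') := by
    intro p q p' q'
    simp only [map_add, map_smul, LinearMap.add_apply, LinearMap.smul_apply,
      smul_eq_mul, hBu, hBw, hBuw, hBwu]
    ring
  have hwu : ⟪w, u⟫ = 0 := by rw [real_inner_comm]; exact huw
  have hinner : ∀ p q p' q' : ℝ, ⟪p • u + q • w, p' • u + q' • w⟫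
      = p * p' + q * q' := by
    intro p q p' q'
    simp only [inner_add_left, inner_add_right, real_inner_smul_left,
      real_inner_smul_right, huu, hww, huw, hwu]
    ring
  set x1 := ⟪u, x⟫ with hx1_def
  set x2 := ⟪w, x⟫ with hx2_def
  have hxr : x = x1 • u + x2 • w := hrep x
  have hxc : al * x1 ^ 2 + be * x2 ^ 2 = 1 := by
    have h := hx
    rw [hxr, hBzz] at h
    linear_combination h
  have hgr : g = (al * x1) • u + (be * x2) • w := by
    have h1 : ⟪u, g⟫ = al * x1 := by
      rw [real_inner_comm, hg, hxr]
      have h := hBzz x1 x2 1 0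
      simpa using h
    have h2 : ⟪w, g⟫ = be * x2 := by
      rw [real_inner_comm, hg, hxr]
      have h := hBzz x1 x2 0 1
      simpa using h
    calc g = ⟪u, g⟫ • u + ⟪w, g⟫ • w := hrep g
    _ = (al * x1) • u + (be * x2) • w := by rw [h1, h2]
  set N := ‖g‖ with hN_def
  have hNsq : N ^ 2 = al ^ 2 * x1 ^ 2 + be ^ 2 * x2 ^ 2 := by
    rw [← real_inner_self_eq_norm_sq, hgr, hinner]
    ring
  have hg0 : g ≠ 0 := by
    intro h
    rw [← hg x, h] at hx
    simp at hx
  have hNpos : 0 < N := norm_pos_iff.mpr hg0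
  have hN0 : N ≠ 0 := ne_of_gt hNpos
  set r := a ^ 2 / b with hr_def
  have hrpos : 0 < r := by positivity
  have hrr : al ^ 2 * r ^ 2 = be := by
    rw [hal_def, hbe_def, hr_def]
    field_simp
  constructor
  · rw [Metric.mem_sphere, dist_eq_norm, sub_sub_cancel, norm_smul]
    rw [Real.norm_eq_abs, abs_of_nonneg (by positivity)]
    field_simp
    rfl
  · intro v hv
    rw [Metric.mem_closedBall, dist_eq_norm] at hv
    set v1 := ⟪u, v⟫ with hv1_def
    set v2 := ⟪w, v⟫ with hv2_def
    have hvr : v = v1 • u + v2 • w := hrep v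
    set d1 := v1 - x1 + r / N * (al * x1) with hd1_def
    set d2 := v2 - x2 + r / N * (be * x2) with hd2_def
    have hs : (r * N⁻¹) = r / N := (div_eq_mul_inv r N).symm
    have hvc : v - (x - (r * N⁻¹) • g) = d1 • u + d2 • w := by
      rw [hvr, hxr, hgr, hs, hd1_def, hd2_def]
      module
    have hdist : d1 ^ 2 + d2 ^ 2 ≤ r ^ 2 := by
      have h1 : ‖v - (x - (r * N⁻¹) • g)‖ ^ 2 = d1 ^ 2 + d2 ^ 2 := by
        rw [← real_inner_self_eq_norm_sq, hvc, hinner]; ring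
      have h2 : ‖v - (x - (r * N⁻¹) • g)‖ ^ 2 ≤ r ^ 2 :=
        pow_le_pow_left₀ (norm_nonneg _) hv 2
      rw [h1] at h2
      exact h2
    have hkey := keyineq al be x1 x2 d1 d2 N r hbe hba hxc hNsq hNpos hrr hrpos hdist
    show B v v ≤ 1
    rw [hvr, hBzz]
    have e1 : v1 = x1 - r / N * (al * x1) + d1 := by rw [hd1_def]; ring
    have e2 : v2 = x2 - r / N * (be * x2) + d2 := by rw [hd2_def]; ring
    rw [e1, e2]
    calc al * ((x1 - r / N * (al * x1) + d1) * (x1 - r / N * (al * x1) + d1))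
        + be * ((x2 - r / N * (be * x2) + d2) * (x2 - r / N * (be * x2) + d2))
        = al * (x1 - r / N * (al * x1) + d1) ^ 2
          + be * (x2 - r / N * (be * x2) + d2) ^ 2 := by ring
      _ ≤ 1 := hkey
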